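/- With identical valuations, the lexicographically maximal allocation (with respect to the sorted vector of bundle values) has the property that for every subset J of agents, no |J|-repartition of ∪_{j∈J} A_j has minimum bundle value strictly greater than min_{j∈J} v(A_j). -/

import Mathlib

open Finset

lemma sorted_lex_of_count {m : ℝ} : ∀ (la lb : List ℝ), la.Pairwise (· ≤ ·) → lb.Pairwise (· ≤ ·) →
    la.length = lb.length →
    la.filter (fun x => decide (x < m)) = lb.filter (fun x => decide (x < m)) →
    lb.countP (fun x => decide (x = m)) < la.countP (fun x => decide (x = m)) →
    List.Lex (· < ·) la lb := by
  intro la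
  induction la with
  | nil => intro lb _ _ _ _ hc; simp at hc
  | cons a ta ih =>
    intro lb hsa hsb hlen hf hc
    cases lb with
    | nil => simp at hlen
    | cons b tb =>
      rcases lt_trichotomy a b with hab | hab | hab
      · exact List.Lex.rel hab
      · subst hab
        apply List.Lex.cons
        apply ih tb hsa.of_cons hsb.of_cons (by simpa using hlen)
        · by_cases hm : a < m
          · simp only [List.filter_cons, hm] at hf
            simpa using hf
          · simpa [List.filter_cons, hm] using hf
        · simp only [List.countP_cons] at hc
          omega
      · exfalso
        by_cases hbm : b < m
        · have hb : b ∈ List.filter (fun x => decide (x < m)) (a :: ta) := by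
            rw [hf]; simp [hbm]
          have hb' : b ∈ a :: ta := List.mem_of_mem_filter hb
          rcases List.mem_cons.mp hb' with h | h
          · exact absurd h.symm (ne_of_gt hab)
          · exact absurd (List.rel_of_pairwise_cons hsa h) (not_le.mpr hab)
        · have hm2 : ∃ x ∈ (a :: ta), x = m := by
            have := (List.countP_pos_iff (p := fun x => decide (x = m)) (l := a :: ta)).mp (by omega)
            simpa using this
          obtain ⟨x, hx, hxm⟩ := hm2
          have hax : a ≤ x := by
            rcases List.mem_cons.mp hx with h | h
            · exact le_of_eq h.symm
            · exact List.rel_of_pairwise_cons hsa h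
          have : m ≤ b := not_lt.mp hbm
          rw [hxm] at hax
          linarith

/-- The ascending sorted vector of bundle values of an allocation. -/
noncomputable def sortedVals {α : Type*} [Fintype α] {n : ℕ}
    (v : Finset α → ℝ) (A : Fin n → Finset α) : List ℝ :=
  Multiset.sort (Multiset.map (fun i => v (A i)) (Finset.univ : Finset (Fin n)).val) (· ≤ ·)

/-- With identical valuations, a lexicographically maximal allocation (w.r.t.
the ascending sorted vector of bundle values) is such that, for every group
`J` of agents, no `|J|`-repartition of `∪_{j∈J} A_j` has minimum bundle value
strictly greater than `min_{j∈J} v(A_j)`. -/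
theorem lex_maximal_no_better_repartition {α : Type*} [Fintype α] [DecidableEq α]
    {n : ℕ} (v : Finset α → ℝ) (hv : ∀ S, 0 ≤ v S)
    (A : Fin n → Finset α)
    (hdisj : ∀ i j, i ≠ j → Disjoint (A i) (A j))
    (hcover : Finset.univ.biUnion A = Finset.univ)
    (hmax : ∀ B : Fin n → Finset α,
      (∀ i j, i ≠ j → Disjoint (B i) (B j)) →
      Finset.univ.biUnion B = Finset.univ →
      List.Lex (· < ·) (sortedVals v B) (sortedVals v A) ∨
        sortedVals v B = sortedVals v A) :
    ∀ (J : Finset (Fin n)) (hJ : J.Nonempty) (P : α → Fin J.card),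
      (⨅ j : Fin J.card, v ((J.biUnion A).filter (fun g => P g = j))) ≤
        J.inf' hJ (fun j => v (A j)) := by
  intro J hJ P
  by_contra hcon
  push_neg at hcon
  set m := J.inf' hJ (fun j => v (A j)) with hm
  set part : Fin J.card → Finset α := fun j => (J.biUnion A).filter (fun g => P g = j)
    with hpartdef
  have hpartgt : ∀ j, m < v (part j) := fun j =>
    lt_of_lt_of_le hcon (ciInf_le (Finite.bddBelow_range _) j)
  have hcard : 0 < J.card := Finset.card_pos.mpr hJ
  set e := J.equivFin with he
  set σ : Fin n → Fin J.card := fun i => if h : i ∈ J then e ⟨i, h⟩ else ⟨0, hcard⟩ with hσ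
  set B : Fin n → Finset α := fun i => if i ∈ J then part (σ i) else A i with hB
  have hσinj : ∀ i ∈ J, ∀ k ∈ J, σ i = σ k → i = k := by
    intro i hi k hk h
    simp only [hσ, dif_pos hi, dif_pos hk] at h
    have := e.injective h
    exact congrArg Subtype.val this
  have hBJ : ∀ i ∈ J, B i = part (σ i) := fun i hi => by simp [hB, hi]
  have hBnJ : ∀ i, i ∉ J → B i = A i := fun i hi => by simp [hB, hi]
  have hpartsub : ∀ j, part j ⊆ J.biUnion A := fun j => Finset.filter_subset _ _
  have hJAdisj : ∀ k, k ∉ J → Disjoint (J.biUnion A) (A k) := by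
    intro k hk
    apply Finset.disjoint_biUnion_left _ _ _ |>.mpr
    intro i hi
    exact hdisj i k (fun h => hk (h ▸ hi))
  have hBdisj : ∀ i k, i ≠ k → Disjoint (B i) (B k) := by
    intro i k hik
    by_cases hi : i ∈ J <;> by_cases hk : k ∈ J
    · rw [hBJ i hi, hBJ k hk]
      rw [Finset.disjoint_left]
      intro g hg1 hg2
      simp only [hpartdef, Finset.mem_filter] at hg1 hg2
      exact hik (hσinj i hi k hk (hg1.2.symm.trans hg2.2))
    · rw [hBJ i hi, hBnJ k hk]
      exact Finset.disjoint_of_subset_left (hpartsub _) (hJAdisj k hk)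
    · rw [hBnJ i hi, hBJ k hk]
      exact (Finset.disjoint_of_subset_left (hpartsub _) (hJAdisj i hi)).symm
    · rw [hBnJ i hi, hBnJ k hk]
      exact hdisj i k hik
  have hBcover : Finset.univ.biUnion B = Finset.univ := by
    apply Finset.eq_univ_of_forall
    intro g
    have hg : g ∈ Finset.univ.biUnion A := by rw [hcover]; exact Finset.mem_univ g
    obtain ⟨j, _, hgj⟩ := Finset.mem_biUnion.mp hg
    by_cases hjJ : j ∈ J
    · set i := (e.symm (P g)).1 with hi
      have hiJ : i ∈ J := (e.symm (P g)).2
      have hσi : σ i = P g := by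
        simp only [hσ, dif_pos hiJ]
        have : (⟨i, hiJ⟩ : {x // x ∈ J}) = e.symm (P g) := rfl
        rw [this, Equiv.apply_symm_apply]
      apply Finset.mem_biUnion.mpr
      refine ⟨i, Finset.mem_univ i, ?_⟩
      rw [hBJ i hiJ, hpartdef]
      simp only [Finset.mem_filter]
      exact ⟨Finset.mem_biUnion.mpr ⟨j, hjJ, hgj⟩, hσi.symm⟩
    · exact Finset.mem_biUnion.mpr ⟨j, Finset.mem_univ j, (hBnJ j hjJ) ▸ hgj⟩
  -- multiset decomposition
  have hsplit : ∀ (f : Fin n → ℝ),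
      Multiset.map f (Finset.univ : Finset (Fin n)).val
        = Multiset.map f J.val + Multiset.map f ((Finset.univ : Finset (Fin n)).val.filter (· ∉ J)) := by
    intro f
    have h1 : (Finset.univ : Finset (Fin n)).val
        = (Finset.univ : Finset (Fin n)).val.filter (· ∈ J)
          + (Finset.univ : Finset (Fin n)).val.filter (· ∉ J) :=
      (Multiset.filter_add_not _ _).symm
    have h2 : (Finset.univ : Finset (Fin n)).val.filter (· ∈ J) = J.val := by
      rw [← Finset.filter_val]
      congr 1
      simp
    rw [← h2]
    conv_lhs => rw [h1]
    rw [Multiset.map_add]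
  have hWeq : Multiset.map (fun i => v (B i)) ((Finset.univ : Finset (Fin n)).val.filter (· ∉ J))
      = Multiset.map (fun i => v (A i)) ((Finset.univ : Finset (Fin n)).val.filter (· ∉ J)) := by
    apply Multiset.map_congr rfl
    intro i hi
    rw [hBnJ i (Multiset.mem_filter.mp hi).2]
  set la := sortedVals v A with hla
  set lb := sortedVals v B with hlb
  have hcoeA : (la : Multiset ℝ) = Multiset.map (fun i => v (A i)) (Finset.univ : Finset (Fin n)).val :=
    Multiset.sort_eq _ _
  have hcoeB : (lb : Multiset ℝ) = Multiset.map (fun i => v (B i)) (Finset.univ : Finset (Fin n)).val :=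
    Multiset.sort_eq _ _
  have hsortA : la.Pairwise (· ≤ ·) := Multiset.pairwise_sort _ _
  have hsortB : lb.Pairwise (· ≤ ·) := Multiset.pairwise_sort _ _
  have hlen : la.length = lb.length := by
    simp [hla, hlb, sortedVals]
  -- filter equality
  have hfiltA : ∀ x ∈ Multiset.map (fun i => v (A i)) J.val, ¬ (x < m) := by
    intro x hx
    obtain ⟨i, hi, rfl⟩ := Multiset.mem_map.mp hx
    exact not_lt.mpr (Finset.inf'_le _ hi)
  have hfiltB : ∀ x ∈ Multiset.map (fun i => v (B i)) J.val, ¬ (x < m) ∧ x ≠ m := by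
    intro x hx
    obtain ⟨i, hi, rfl⟩ := Multiset.mem_map.mp hx
    rw [hBJ i hi]
    exact ⟨not_lt.mpr (le_of_lt (hpartgt _)), (ne_of_gt (hpartgt _))⟩
  have hfilteq : la.filter (fun x => decide (x < m)) = lb.filter (fun x => decide (x < m)) := by
    apply List.Perm.eq_of_pairwise' (hsortA.filter _) (hsortB.filter _)
    apply Multiset.coe_eq_coe.mp
    have hA' : ((la.filter (fun x => decide (x < m)) : List ℝ) : Multiset ℝ)
        = Multiset.filter (fun x => x < m) (la : Multiset ℝ) := by
      simp [Multiset.filter_coe]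
    have hB' : ((lb.filter (fun x => decide (x < m)) : List ℝ) : Multiset ℝ)
        = Multiset.filter (fun x => x < m) (lb : Multiset ℝ) := by
      simp [Multiset.filter_coe]
    rw [hA', hB', hcoeA, hcoeB, hsplit, hsplit, Multiset.filter_add, Multiset.filter_add, hWeq]
    congr 1
    rw [Multiset.filter_eq_nil.mpr hfiltA, Multiset.filter_eq_nil.mpr (fun x hx => (hfiltB x hx).1)]
  -- count
  have hcount : lb.countP (fun x => decide (x = m)) < la.countP (fun x => decide (x = m)) := by
    have hA' : la.countP (fun x => decide (x = m)) = Multiset.countP (fun x => x = m) (la : Multiset ℝ) := by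
      simp [Multiset.coe_countP]
    have hB' : lb.countP (fun x => decide (x = m)) = Multiset.countP (fun x => x = m) (lb : Multiset ℝ) := by
      simp [Multiset.coe_countP]
    rw [hA', hB', hcoeA, hcoeB, hsplit, hsplit, Multiset.countP_add, Multiset.countP_add, hWeq]
    have hzero : Multiset.countP (fun x => x = m) (Multiset.map (fun i => v (B i)) J.val) = 0 :=
      Multiset.countP_eq_zero.mpr (fun x hx => (hfiltB x hx).2)
    have hpos : 0 < Multiset.countP (fun x => x = m) (Multiset.map (fun i => v (A i)) J.val) := by
      apply Multiset.countP_pos.mpr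
      obtain ⟨j0, hj0, hj0eq⟩ := Finset.exists_mem_eq_inf' hJ (fun j => v (A j))
      exact ⟨v (A j0), Multiset.mem_map.mpr ⟨j0, hj0, rfl⟩, hj0eq.symm⟩
    omega
  have hlex : List.Lex (· < ·) la lb :=
    sorted_lex_of_count la lb hsortA hsortB hlen hfilteq hcount
  rcases hmax B hBdisj hBcover with h | h
  · exact absurd (List.lex_trans (r := (· < · : ℝ → ℝ → Prop)) (fun h1 h2 => lt_trans h1 h2) hlex h) (irrefl_of (List.Lex (· < ·)) la)
  · rw [hlb, h] at hlex
    exact absurd hlex (irrefl_of (List.Lex (· < ·)) la)
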